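/- Let A = cone{(3,0,3), (0,1,3), (0,−1,3), (−3,0,−2)} ⊆ ℝ³ (the set of all nonnegative combinations of these four vectors). For all real x₁, x₂ with 0 < |x₂| < x₁, the metric projection of the point x⁰ = (x₁, x₂, 0) onto A is P_A(x⁰) = (x₁/2, 0, x₁/2), and consequently the reflection is R_A(x⁰) = 2P_A(x⁰) − x⁰ = (0, −x₂, x₁). -/

import Mathlib

open RealInnerProductSpace

/-- The point of `ℝ³ = EuclideanSpace ℝ (Fin 3)` with coordinates `(a, b, c)`. -/
noncomputable def vec3 (a b c : ℝ) : EuclideanSpace ℝ (Fin 3) :=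
  (WithLp.equiv 2 (Fin 3 → ℝ)).symm ![a, b, c]

/-- Let `A = cone{(3,0,3), (0,1,3), (0,−1,3), (−3,0,−2)} ⊆ ℝ³`. For all
reals `x₁, x₂` with `0 < |x₂| < x₁`, the metric projection of `x⁰ = (x₁, x₂, 0)` onto `A` is
`(x₁/2, 0, x₁/2)` (characterized by membership in `A` and the variational inequality), and
consequently the reflection is `R_A(x⁰) = 2 P_A(x⁰) − x⁰ = (0, −x₂, x₁)`. -/
theorem projection_onto_concrete_cone
    (A : Set (EuclideanSpace ℝ (Fin 3)))
    (hA : A = {x : EuclideanSpace ℝ (Fin 3) | ∃ α : Fin 4 → ℝ, (∀ i, 0 ≤ α i) ∧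
      x = ∑ i, α i •
        ![vec3 3 0 3, vec3 0 1 3, vec3 0 (-1) 3, vec3 (-3) 0 (-2)] i})
    (x₁ x₂ : ℝ) (hx₂ : 0 < |x₂|) (hx₁ : |x₂| < x₁) :
    vec3 (x₁ / 2) 0 (x₁ / 2) ∈ A ∧
    (∀ y ∈ A, ⟪y - vec3 (x₁ / 2) 0 (x₁ / 2), vec3 x₁ x₂ 0 - vec3 (x₁ / 2) 0 (x₁ / 2)⟫ ≤ 0) ∧
    (2 : ℝ) • vec3 (x₁ / 2) 0 (x₁ / 2) - vec3 x₁ x₂ 0 = vec3 0 (-x₂) x₁ := by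

  have habs := abs_le.mp hx₁.le
  have hx1pos : (0:ℝ) < x₁ := lt_of_le_of_lt (abs_nonneg x₂) hx₁
  refine ⟨?_, ?_, ?_⟩
  · rw [hA]
    refine ⟨![x₁/6, 0, 0, 0], ?_, ?_⟩
    · intro i
      fin_cases i <;> simp <;> positivity
    · simp [Fin.sum_univ_four, vec3]
      ext j
      fin_cases j <;> simp [WithLp.equiv_symm_apply, PiLp.toLp_apply] <;> ring
  · intro y hy
    rw [hA] at hy
    obtain ⟨α, hα, rfl⟩ := hy
    have h0 := hα 0
    have h1 := hα 1
    have h2 := hα 2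
    have h3 := hα 3
    simp only [Fin.sum_univ_four, Matrix.cons_val_zero, Matrix.cons_val_one, Matrix.head_cons,
      Matrix.cons_val_two, Matrix.tail_cons, Matrix.cons_val_three]
    rw [PiLp.inner_apply]
    simp only [RCLike.inner_apply, conj_trivial]
    rw [Fin.sum_univ_three]
    simp [vec3, WithLp.equiv_symm_apply, PiLp.toLp_apply]
    nlinarith [mul_nonneg h1 hx1pos.le, mul_nonneg h2 hx1pos.le, mul_nonneg h3 hx1pos.le,
      mul_nonneg h1 (sub_nonneg.mpr habs.2), mul_nonneg h2 (sub_nonneg.mpr (neg_le.mp habs.1))]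
  · ext j
    fin_cases j <;> simp [vec3, WithLp.equiv_symm_apply, PiLp.toLp_apply] <;> ring
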